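/- (Theorem 1, Scenario A, first kind of Nash equilibrium.) Assume r_A/p_A = r_D/p_D ≤ 1 and 0 ≤ q_I ≤ (1/(r_A/p_A + 1))² − 1/2. Let β* ∈ (0,1] satisfy p_D(β*)²/(r_D + p_D(β*)²) ≥ √(1/2 + q_I), and set α* = r_D/(p_D β*). Then α* ∈ (0,1] and (α*, β*, 1) is a Nash equilibrium of the game with objectives (J_A, J_D, J_I): J_A(α*,β*,1) ≤ J_A(α,β*,1) for all α ∈ (0,1], J_D(α*,β*,1) ≤ J_D(α*,β,1) for all β ∈ (0,1], and J_I(α*,β*,1) ≥ J_I(α*,β*,γ) for all γ ∈ [0,1]. -/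

import Mathlib

/-- Attacker's average cost. -/
noncomputable def JA (pA qA α β γ : ℝ) : ℝ :=
  (pA * (1 - γ) ^ 2 + qA * α ^ 2 + γ ^ 2) * (β / (α + β)) ^ 2

/-- Defender's average cost. -/
noncomputable def JD (pD qD α β γ : ℝ) : ℝ :=
  (pD * (1 - γ) ^ 2 + qD * β ^ 2 + γ ^ 2) * (α / (α + β)) ^ 2

/-- Insider's average profit. -/
noncomputable def JI (pI qI α β γ : ℝ) : ℝ :=
  (pI + γ ^ 2) * (β / (α + β)) ^ 2 - (qI * γ + γ ^ 2 / 2)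

/-- Attacker's reduced cost (no cooperation with the insider): J_A⁰(α,β) = J_A(α,β,0). -/
noncomputable def JA0 (pA qA α β : ℝ) : ℝ := JA pA qA α β 0

/-- Defender's reduced cost (unaware of the insider): J_D⁰(α,β) = J_D(α,β,0). -/
noncomputable def JD0 (pD qD α β : ℝ) : ℝ := JD pD qD α β 0


set_option maxHeartbeats 1000000 in
/-- Theorem 1, Scenario A, first kind of Nash equilibrium. -/
theorem scenarioA_first_NE (pA pD pI qA qD qI rA rD : ℝ)
    (hpA : pA ∈ Set.Ioo (0:ℝ) 1) (hpD : pD ∈ Set.Ioo (0:ℝ) 1) (hpI : pI ∈ Set.Ioo (0:ℝ) 1)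
    (hqA : 0 < qA) (hqD : 0 < qD) (hqI : 0 ≤ qI)
    (hrA : rA = pA / qA) (hrD : rD = pD / qD)
    (h1 : rA / pA = rD / pD) (h2 : rD / pD ≤ 1)
    (h3 : qI ≤ (1 / (rA / pA + 1)) ^ 2 - 1 / 2)
    (βs : ℝ) (hβs : βs ∈ Set.Ioc (0:ℝ) 1)
    (hβcond : Real.sqrt (1 / 2 + qI) ≤ pD * βs ^ 2 / (rD + pD * βs ^ 2))
    (αs : ℝ) (hαs : αs = rD / (pD * βs)) :
    αs ∈ Set.Ioc (0:ℝ) 1 ∧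
    (∀ α ∈ Set.Ioc (0:ℝ) 1, JA pA qA αs βs 1 ≤ JA pA qA α βs 1) ∧
    (∀ β ∈ Set.Ioc (0:ℝ) 1, JD pD qD αs βs 1 ≤ JD pD qD αs β 1) ∧
    (∀ γ ∈ Set.Icc (0:ℝ) 1, JI pI qI αs βs γ ≤ JI pI qI αs βs 1) := by
  obtain ⟨hpA0, hpA1⟩ := hpA
  obtain ⟨hpD0, hpD1⟩ := hpD
  obtain ⟨hb0, hb1⟩ := hβs
  have hqAD : qA = qD := by
    rw [hrA, hrD] at h1
    field_simp at h1
    have h : pA * pD * (qD - qA) = 0 := by linear_combination (pA * pD) * h1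
    rcases mul_eq_zero.mp h with h' | h'
    · exact absurd h' (by positivity)
    · linarith
  -- α* = 1/(qD βs)
  have hαs' : αs = 1 / (qD * βs) := by
    rw [hαs, hrD]; field_simp
  have hα0 : 0 < αs := by
    rw [hαs']; positivity
  have hprod : qD * αs * βs = 1 := by
    rw [hαs']; field_simp
  have hK0 : 0 < qD * βs ^ 2 := by positivity
  have hKden : (0:ℝ) < 1 + qD * βs ^ 2 := by positivity
  have hsum : 0 < αs + βs := by linarith
  have hc : βs / (αs + βs) = qD * βs ^ 2 / (1 + qD * βs ^ 2) := by
    rw [hαs']; field_simp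
  have hcond' : Real.sqrt (1 / 2 + qI) ≤ qD * βs ^ 2 / (1 + qD * βs ^ 2) := by
    have heq : pD * βs ^ 2 / (rD + pD * βs ^ 2) = qD * βs ^ 2 / (1 + qD * βs ^ 2) := by
      rw [hrD]; field_simp
    rw [heq] at hβcond; exact hβcond
  have hc2 : 1 / 2 + qI ≤ (qD * βs ^ 2 / (1 + qD * βs ^ 2)) ^ 2 := by
    have h := Real.sq_sqrt (by linarith : (0:ℝ) ≤ 1 / 2 + qI)
    nlinarith [Real.sqrt_nonneg (1 / 2 + qI), hcond']
  -- qD βs² > 1, hence αs ≤ 1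
  have hc2' : (1 / 2 + qI) * (1 + qD * βs ^ 2) ^ 2 ≤ (qD * βs ^ 2) ^ 2 := by
    rw [div_pow, le_div_iff₀ (by positivity)] at hc2
    linarith
  have hKbig : 1 < qD * βs ^ 2 := by nlinarith
  have hα1 : αs ≤ 1 := by
    rw [hαs', div_le_one (by positivity)]
    nlinarith [mul_nonneg hqD.le (mul_nonneg hb0.le (sub_nonneg.mpr hb1))]
  refine ⟨⟨hα0, hα1⟩, ?_, ?_, ?_⟩
  · -- attacker
    intro α ⟨hα0', hα1'⟩
    have hs1 : 0 < α + βs := by linarith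
    have key : (qD * α ^ 2 + 1) * (αs + βs) ^ 2 - (qD * αs ^ 2 + 1) * (α + βs) ^ 2
        = (1 + qD * βs ^ 2) * (α - αs) ^ 2 := by
      linear_combination (2 * (α - αs) * (α + βs)) * hprod
    have h5 : (0:ℝ) ≤ (1 + qD * βs ^ 2) * (α - αs) ^ 2 := by positivity
    have h6 : (qD * αs ^ 2 + 1) * (α + βs) ^ 2 ≤ (qD * α ^ 2 + 1) * (αs + βs) ^ 2 := by
      linarith
    have h4 := mul_le_mul_of_nonneg_right h6 (sq_nonneg βs)
    simp only [JA, hqAD]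
    rw [div_pow, div_pow, ← mul_div_assoc, ← mul_div_assoc,
      div_le_div_iff₀ (by positivity) (by positivity)]
    linarith [h4]
  · -- defender
    intro β ⟨hβ0', hβ1'⟩
    have hs1 : 0 < αs + β := by linarith
    have key : (qD * β ^ 2 + 1) * (αs + βs) ^ 2 - (qD * βs ^ 2 + 1) * (αs + β) ^ 2
        = (1 + qD * αs ^ 2) * (β - βs) ^ 2 := by
      linear_combination (2 * (β - βs) * (β + αs)) * hprod
    have h5 : (0:ℝ) ≤ (1 + qD * αs ^ 2) * (β - βs) ^ 2 := by positivity
    have h6 : (qD * βs ^ 2 + 1) * (αs + β) ^ 2 ≤ (qD * β ^ 2 + 1) * (αs + βs) ^ 2 := by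
      linarith
    have h4 := mul_le_mul_of_nonneg_right h6 (sq_nonneg αs)
    simp only [JD]
    rw [div_pow, div_pow, ← mul_div_assoc, ← mul_div_assoc,
      div_le_div_iff₀ (by positivity) (by positivity)]
    linarith [h4]
  · -- insider
    intro γ ⟨hγ0, hγ1⟩
    simp only [JI, hc]
    set C : ℝ := qD * βs ^ 2 / (1 + qD * βs ^ 2) with hCdef
    have hstep : 0 ≤ (1 + γ) * (C ^ 2 - 1 / 2) - qI := by
      nlinarith [mul_nonneg hγ0 (by linarith : (0:ℝ) ≤ C ^ 2 - 1 / 2)]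
    nlinarith [mul_nonneg (sub_nonneg.mpr hγ1) hstep]
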